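/- Let (λ_k) be a sequence of reals bounded in [c, C] with 0 < c ≤ C and liminf over δ' < 1 behavior: for every δ < 1, liminf_n δ^n ∏_{k=1}^n λ_k = 0. Then there exist δ_j < 1 with δ_j → 1 and a strictly increasing sequence (n_j) of integers such that liminf_{K→∞} ∏_{j=1}^K ∏_{ℓ=n_j+1}^{n_{j+1}} δ_j λ_ℓ = 0. -/

import Mathlib

open scoped BigOperators
open Filter

theorem blockwise_damping_lemma
    (lam : ℕ → ℝ) (c C : ℝ) (hc : 0 < c) (hcC : c ≤ C)
    (hbd : ∀ k, c ≤ lam k ∧ lam k ≤ C)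
    (hdamp : ∀ δ : ℝ, 0 < δ → δ < 1 →
      atTop.liminf (fun n => δ ^ n * ∏ k ∈ Finset.range n, lam k) = 0) :
    ∃ δ' : ℕ → ℝ, (∀ j, 0 < δ' j) ∧ (∀ j, δ' j < 1) ∧
      Tendsto δ' atTop (nhds 1) ∧
      ∃ n : ℕ → ℕ, StrictMono n ∧
        atTop.liminf (fun K => ∏ j ∈ Finset.range K,
          ∏ ℓ ∈ Finset.Ico (n j + 1) (n (j + 1) + 1), δ' j * lam ℓ) = 0 := by
  classical
  set P : ℕ → ℝ := fun n => ∏ k ∈ Finset.range n, lam k with hPdef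
  have hlam_pos : ∀ k, 0 < lam k := fun k => lt_of_lt_of_le hc (hbd k).1
  have hC : 0 < C := lt_of_lt_of_le hc hcC
  have hPpos : ∀ m, 0 < P m := fun m => Finset.prod_pos fun k _ => hlam_pos k
  -- helper: tendsto atTop implies liminf = 0 (real junk value)
  have junk : ∀ f : ℕ → ℝ, Tendsto f atTop atTop → atTop.liminf f = 0 := by
    intro f hf
    rw [Filter.liminf_eq]
    apply Real.sSup_of_not_bddAbove
    rintro ⟨b, hb⟩
    have hmem : (b + 1) ∈ {a : ℝ | ∀ᶠ m in atTop, a ≤ f m} :=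
      hf.eventually_ge_atTop (b + 1)
    have := hb hmem
    linarith
  -- helper : 1/(j+2) → 0
  have hinv : Tendsto (fun j : ℕ => 1 / ((j : ℝ) + 2)) atTop (nhds 0) := by
    have h : Tendsto (fun j : ℕ => ((j : ℝ) + 2)) atTop atTop :=
      tendsto_atTop_add_const_right atTop (2 : ℝ) tendsto_natCast_atTop_atTop
    simpa [one_div, Pi.inv_def] using h.inv_tendsto_atTop
  -- dichotomy
  have dich : ∀ δ : ℝ, 0 < δ → δ < 1 →
      Tendsto (fun m => δ ^ m * P m) atTop atTop ∨
      (∀ ε, 0 < ε → ∀ N, ∃ m, N < m ∧ δ ^ m * P m < ε) := by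
    intro δ h0 h1
    by_cases hT : ∀ ε, 0 < ε → ∀ N, ∃ m, N < m ∧ δ ^ m * P m < ε
    · exact Or.inr hT
    left
    push_neg at hT
    obtain ⟨ε, hε, N, hN⟩ := hT
    have hev : ∀ᶠ m in atTop, ε ≤ δ ^ m * P m := by
      filter_upwards [eventually_gt_atTop N] with m hm
      exact hN m hm
    have hlim := hdamp δ h0 h1
    rw [Filter.liminf_eq] at hlim
    have hmem : ε ∈ {a : ℝ | ∀ᶠ m in atTop, a ≤ δ ^ m * P m} := hev
    have hnb : ¬BddAbove {a : ℝ | ∀ᶠ m in atTop, a ≤ δ ^ m * P m} := by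
      intro hb
      have h2 := le_csSup hb hmem
      rw [hlim] at h2
      linarith
    rw [not_bddAbove_iff] at hnb
    rw [tendsto_atTop]
    intro b
    obtain ⟨x, hx, hbx⟩ := hnb b
    filter_upwards [hx] with m hm
    exact le_of_lt (lt_of_lt_of_le hbx hm)
  by_cases hA : ∃ δ : ℝ, 0 < δ ∧ δ < 1 ∧ Tendsto (fun m => δ ^ m * P m) atTop atTop
  · -- degenerate case: products blow up, liminf = 0 by junk
    obtain ⟨d, hd0, hd1, hdT⟩ := hA
    refine ⟨fun j => max d (1 - 1 / ((j : ℝ) + 2)), ?_, ?_, ?_, id, strictMono_id, ?_⟩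
    · exact fun j => lt_of_lt_of_le hd0 (le_max_left _ _)
    · intro j
      apply max_lt hd1
      have : (0 : ℝ) < 1 / ((j : ℝ) + 2) := by positivity
      linarith
    · apply tendsto_of_tendsto_of_tendsto_of_le_of_le
        (g := fun j : ℕ => 1 - 1 / ((j : ℝ) + 2)) (h := fun _ : ℕ => (1 : ℝ))
      · simpa using tendsto_const_nhds.sub hinv
      · exact tendsto_const_nhds
      · intro j; exact le_max_right _ _
      · intro j
        apply le_of_lt
        apply max_lt hd1
        have : (0 : ℝ) < 1 / ((j : ℝ) + 2) := by positivity
        linarith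
    · apply junk
      have hsimp : ∀ K : ℕ, (∏ j ∈ Finset.range K,
          ∏ ℓ ∈ Finset.Ico (id j + 1) (id (j + 1) + 1),
            max d (1 - 1 / ((j : ℝ) + 2)) * lam ℓ)
          = ∏ j ∈ Finset.range K, (max d (1 - 1 / ((j : ℝ) + 2)) * lam (j + 1)) := by
        intro K
        apply Finset.prod_congr rfl
        intro j _
        simp [Nat.Ico_succ_singleton]
      have key : ∀ K : ℕ, d ^ (K + 1) * P (K + 1) * (d * lam 0)⁻¹ ≤
          ∏ j ∈ Finset.range K, (max d (1 - 1 / ((j : ℝ) + 2)) * lam (j + 1)) := by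
        intro K
        have h2 : d ^ (K + 1) * P (K + 1) * (d * lam 0)⁻¹
            = ∏ j ∈ Finset.range K, (d * lam (j + 1)) := by
          have hp : P (K + 1) = (∏ j ∈ Finset.range K, lam (j + 1)) * lam 0 :=
            Finset.prod_range_succ' lam K
          rw [hp, Finset.prod_mul_distrib, Finset.prod_const]
          have hd0' : d ≠ 0 := ne_of_gt hd0
          have hl0 : lam 0 ≠ 0 := ne_of_gt (hlam_pos 0)
          field_simp
          rw [Finset.card_range]
          ring
        rw [h2]
        apply Finset.prod_le_prod
        · intro j _; exact mul_nonneg hd0.le (hlam_pos _).le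
        · intro j _
          exact mul_le_mul_of_nonneg_right (le_max_left _ _) (hlam_pos _).le
      have hT2 : Tendsto (fun K : ℕ => d ^ (K + 1) * P (K + 1) * (d * lam 0)⁻¹)
          atTop atTop := by
        apply Tendsto.atTop_mul_const
        · exact inv_pos.mpr (mul_pos hd0 (hlam_pos 0))
        · exact hdT.comp (tendsto_add_atTop_nat 1)
      apply tendsto_atTop_mono _ hT2
      intro K
      have h3 := key K
      rw [← hsimp K] at h3
      exact h3
  · -- honest case
    push_neg at hA
    have good : ∀ δ : ℝ, 0 < δ → δ < 1 → ∀ ε, 0 < ε → ∀ N, ∃ m, N < m ∧ δ ^ m * P m < ε :=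
      fun δ h0 h1 => (dich δ h0 h1).resolve_left (hA δ h0 h1)
    set δ' : ℕ → ℝ := fun j => 1 - 1 / ((j : ℝ) + 2) with hδ'def
    have hfrac : ∀ j : ℕ, 1 / ((j : ℝ) + 2) < 1 := by
      intro j
      rw [div_lt_one (by positivity)]
      have : (0 : ℝ) ≤ (j : ℝ) := Nat.cast_nonneg j
      linarith
    have hfracpos : ∀ j : ℕ, (0 : ℝ) < 1 / ((j : ℝ) + 2) := fun j => by positivity
    have hd0 : ∀ j, 0 < δ' j := by
      intro j
      have := hfrac j
      simp only [hδ'def]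
      linarith
    have hd1 : ∀ j, δ' j < 1 := by
      intro j
      have := hfracpos j
      simp only [hδ'def]
      linarith
    have hmono : Monotone δ' := by
      intro i j hij
      simp only [hδ'def]
      have : 1 / ((j : ℝ) + 2) ≤ 1 / ((i : ℝ) + 2) := by
        apply one_div_le_one_div_of_le (by positivity)
        have : (i : ℝ) ≤ (j : ℝ) := Nat.cast_le.mpr hij
        linarith
      linarith
    have hten : Tendsto δ' atTop (nhds 1) := by
      simpa [hδ'def] using tendsto_const_nhds.sub hinv
    have step : ∀ j N, ∃ m, N < m ∧ (δ' j) ^ m * P m < (c / C) * (1 / 2) ^ j := by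
      intro j N
      exact good _ (hd0 j) (hd1 j) _ (by positivity) N
    set n : ℕ → ℕ := fun K => Nat.rec 0 (fun j nj => (step j nj).choose) K with hndef
    have hn0 : n 0 = 0 := rfl
    have hlt : ∀ j, n j < n (j + 1) := fun j => ((step j (n j)).choose_spec).1
    have hsmall : ∀ j, (δ' j) ^ (n (j + 1)) * P (n (j + 1)) < (c / C) * (1 / 2) ^ j :=
      fun j => ((step j (n j)).choose_spec).2
    have hmon : StrictMono n := strictMono_nat_of_lt_succ hlt
    have hsum : ∀ K, ∑ j ∈ Finset.range K, (n (j + 1) - n j) = n K := by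
      intro K
      induction K with
      | zero => simp [hn0]
      | succ K ih => rw [Finset.sum_range_succ, ih, Nat.add_sub_cancel' (hlt K).le]
    have hprod : ∀ K, (∏ j ∈ Finset.range K,
        ∏ ℓ ∈ Finset.Ico (n j + 1) (n (j + 1) + 1), δ' j * lam ℓ)
        = (∏ j ∈ Finset.range K, (δ' j) ^ (n (j + 1) - n j))
          * ∏ ℓ ∈ Finset.Ico 1 (n K + 1), lam ℓ := by
      intro K
      induction K with
      | zero => simp [hn0]
      | succ K ih =>
        rw [Finset.prod_range_succ, ih, Finset.prod_range_succ]
        have hIco : (∏ ℓ ∈ Finset.Ico (n K + 1) (n (K + 1) + 1), δ' K * lam ℓ)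
            = (δ' K) ^ (n (K + 1) - n K)
              * ∏ ℓ ∈ Finset.Ico (n K + 1) (n (K + 1) + 1), lam ℓ := by
          rw [Finset.prod_mul_distrib, Finset.prod_const, Nat.card_Ico]
          have := hlt K
          congr 2
          omega
        rw [hIco]
        have hjoin : (∏ ℓ ∈ Finset.Ico 1 (n K + 1), lam ℓ)
            * ∏ ℓ ∈ Finset.Ico (n K + 1) (n (K + 1) + 1), lam ℓ
            = ∏ ℓ ∈ Finset.Ico 1 (n (K + 1) + 1), lam ℓ :=
          Finset.prod_Ico_consecutive _ (Nat.succ_le_succ (Nat.zero_le _)) (Nat.succ_le_succ (hlt K).le)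
        rw [← hjoin]
        ring
    have hPsplit : ∀ N : ℕ, P (N + 1) = lam 0 * ∏ ℓ ∈ Finset.Ico 1 (N + 1), lam ℓ := by
      intro N
      have h1 : (∏ ℓ ∈ Finset.Ico 1 (N + 1), lam ℓ)
          = ∏ i ∈ Finset.range N, lam (i + 1) := by
        rw [Finset.prod_Ico_eq_prod_range]
        apply Finset.prod_congr (by norm_num)
        intro i _
        rw [add_comm]
      rw [h1]
      show (∏ k ∈ Finset.range (N + 1), lam k) = _
      rw [Finset.prod_range_succ']
      ring
    have hbound : ∀ m : ℕ, (∏ j ∈ Finset.range (m + 1),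
        ∏ ℓ ∈ Finset.Ico (n j + 1) (n (j + 1) + 1), δ' j * lam ℓ) ≤ (1 / 2) ^ m := by
      intro m
      rw [hprod (m + 1)]
      set N := n (m + 1) with hN
      have hD : (∏ j ∈ Finset.range (m + 1), (δ' j) ^ (n (j + 1) - n j))
          ≤ (δ' m) ^ N := by
        calc (∏ j ∈ Finset.range (m + 1), (δ' j) ^ (n (j + 1) - n j))
            ≤ ∏ j ∈ Finset.range (m + 1), (δ' m) ^ (n (j + 1) - n j) := by
              apply Finset.prod_le_prod
              · intro j _; exact pow_nonneg (hd0 j).le _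
              · intro j hj
                have hjm : j ≤ m := Nat.lt_succ_iff.mp (Finset.mem_range.mp hj)
                exact pow_le_pow_left₀ (hd0 j).le (hmono hjm) _
          _ = (δ' m) ^ ∑ j ∈ Finset.range (m + 1), (n (j + 1) - n j) :=
              Finset.prod_pow_eq_pow_sum _ _ _
          _ = (δ' m) ^ N := by rw [hsum]
      have hLnn : (0 : ℝ) ≤ ∏ ℓ ∈ Finset.Ico 1 (N + 1), lam ℓ :=
        Finset.prod_nonneg fun ℓ _ => (hlam_pos ℓ).le
      have hL : (∏ ℓ ∈ Finset.Ico 1 (N + 1), lam ℓ) ≤ P N * (C / c) := by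
        have heq : (∏ ℓ ∈ Finset.Ico 1 (N + 1), lam ℓ) = P (N + 1) / lam 0 := by
          rw [hPsplit N, mul_div_cancel_left₀ _ (ne_of_gt (hlam_pos 0))]
        rw [heq]
        have hPN1 : P (N + 1) = P N * lam N := Finset.prod_range_succ _ _
        rw [hPN1, mul_div_assoc]
        apply mul_le_mul_of_nonneg_left _ (hPpos N).le
        apply div_le_div₀ hC.le (hbd N).2 hc (hbd 0).1
      calc (∏ j ∈ Finset.range (m + 1), (δ' j) ^ (n (j + 1) - n j))
            * ∏ ℓ ∈ Finset.Ico 1 (N + 1), lam ℓ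
          ≤ (δ' m) ^ N * (P N * (C / c)) :=
            mul_le_mul hD hL hLnn (pow_nonneg (hd0 m).le _)
        _ = ((δ' m) ^ N * P N) * (C / c) := by ring
        _ ≤ ((c / C) * (1 / 2) ^ m) * (C / c) := by
            apply mul_le_mul_of_nonneg_right (hsmall m).le
            positivity
        _ = (1 / 2) ^ m := by
            have hc' : c ≠ 0 := ne_of_gt hc
            have hC' : C ≠ 0 := ne_of_gt hC
            field_simp
    refine ⟨δ', hd0, hd1, hten, n, hmon, ?_⟩
    have hub : ∀ K : ℕ, (∏ j ∈ Finset.range K,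
        ∏ ℓ ∈ Finset.Ico (n j + 1) (n (j + 1) + 1), δ' j * lam ℓ)
        ≤ 2 * (1 / 2) ^ K := by
      intro K
      cases K with
      | zero => simp
      | succ m =>
        calc (∏ j ∈ Finset.range (m + 1),
              ∏ ℓ ∈ Finset.Ico (n j + 1) (n (j + 1) + 1), δ' j * lam ℓ)
            ≤ (1 / 2) ^ m := hbound m
          _ = 2 * (1 / 2) ^ (m + 1) := by ring
    have hlb : ∀ K : ℕ, (0 : ℝ) ≤ ∏ j ∈ Finset.range K,
        ∏ ℓ ∈ Finset.Ico (n j + 1) (n (j + 1) + 1), δ' j * lam ℓ := by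
      intro K
      apply Finset.prod_nonneg
      intro j _
      apply Finset.prod_nonneg
      intro ℓ _
      exact mul_nonneg (hd0 j).le (hlam_pos ℓ).le
    have hT0 : Tendsto (fun K : ℕ => (2 : ℝ) * (1 / 2) ^ K) atTop (nhds 0) := by
      have := (tendsto_pow_atTop_nhds_zero_of_lt_one (by norm_num : (0:ℝ) ≤ 1/2)
        (by norm_num : (1:ℝ)/2 < 1)).const_mul (2 : ℝ)
      simpa using this
    have hT : Tendsto (fun K : ℕ => ∏ j ∈ Finset.range K,
        ∏ ℓ ∈ Finset.Ico (n j + 1) (n (j + 1) + 1), δ' j * lam ℓ) atTop (nhds 0) :=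
      tendsto_of_tendsto_of_tendsto_of_le_of_le tendsto_const_nhds hT0 hlb hub
    exact hT.liminf_eq
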